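/- Let n ≥ 2, α ∈ [−1, 0), R > 0, T > 0, and define on the region { x ∈ ℝⁿ : |x|² < R² T^{2/(2−nα)} } the function Ψ(x,t) = C_α ( (t+T)/(R² T^{2/(2−nα)} − |x|²) )^{1/α}, where C_α > 0 satisfies C_α^α = 2 n^{α−1}(n − 2/α). Then at every point (x,t) with |x|² < R² T^{2/(2−nα)} and t ≥ 0 one has ∂_t Ψ − Σ_i ∂_{x_i}( n^{α−1} Ψ^{−α} ∂_{x_i} Ψ ) = (1/α) · (2/(2−nα)) · ( R² T^{2/(2−nα)} / (R² T^{2/(2−nα)} − |x|²) ) · Ψ/(t+T), which is ≤ 0 since α < 0; in particular Ψ is a subsolution of the porous medium equation on the interior of its support. -/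

import Mathlib

/-- Partial derivative in the `i`-th coordinate direction. -/
noncomputable def pd {n : ℕ} (i : Fin n) (f : EuclideanSpace ℝ (Fin n) → ℝ)
    (x : EuclideanSpace ℝ (Fin n)) : ℝ :=
  fderiv ℝ f x (EuclideanSpace.single i (1 : ℝ))

private lemma pme_alg (α nn M G A B Cα P : ℝ) (hα0 : α < 0) (hαne : α ≠ 0)
    (hP : 0 < P) (hgx : 0 < G) (hBpos : 0 < B)
    (h2nα : 0 < 2 - nn * α) (hnd : 0 < nn - 2 / α) (N1 : ℝ) (hN1 : 0 < N1) :
    Cα * (1 / α * (A / B / (P / G)) * (1 / G)) -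
      (nn * (N1 * (2 * N1 * (nn - 2 / α))⁻¹ * Cα * A * (2 * (1 / α)) / P * B⁻¹) +
        N1 * (2 * N1 * (nn - 2 / α))⁻¹ * Cα * A * (2 * (1 / α)) / P *
            (2 * (1 / α) * (B⁻¹ / G)) * (M - G)) =
    1 / α * (2 / (2 - nn * α)) * (M / G) * (Cα * A * B⁻¹ / P) := by
  have h1 : (2:ℝ) - nn * α ≠ 0 := ne_of_gt h2nα
  have h2 : nn - 2 / α ≠ 0 := ne_of_gt hnd
  have h3 : N1 ≠ 0 := ne_of_gt hN1
  have h4 : P ≠ 0 := ne_of_gt hP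
  have h5 : G ≠ 0 := ne_of_gt hgx
  have h6 : B ≠ 0 := ne_of_gt hBpos
  set D : ℝ := nn - 2 / α with hD
  have hrel : 2 - nn * α = -(α * D) := by rw [hD]; field_simp; ring
  rw [hrel]
  have hDne : D ≠ 0 := h2
  have hnn : nn = D + 2 / α := by rw [hD]; field_simp; ring
  clear_value D
  rw [hnn]
  clear hD hrel h1 h2 hnd h2nα hnn
  field_simp
  ring

theorem pme_barrier_subsolution (n : ℕ) (hn : 2 ≤ n) (α R T : ℝ)
    (hα : -1 ≤ α ∧ α < 0) (hR : 0 < R) (hT : 0 < T)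
    (Cα : ℝ) (hCpos : 0 < Cα)
    (hCα : Cα ^ α = 2 * (n : ℝ) ^ (α - 1) * ((n : ℝ) - 2 / α))
    (Ψ : EuclideanSpace ℝ (Fin n) → ℝ → ℝ)
    (hΨ : ∀ x s, Ψ x s = Cα *
      ((s + T) / (R ^ 2 * T ^ (2 / (2 - n * α)) - ‖x‖ ^ 2)) ^ (1 / α)) :
    ∀ (x : EuclideanSpace ℝ (Fin n)) (t : ℝ),
      ‖x‖ ^ 2 < R ^ 2 * T ^ (2 / (2 - n * α)) → 0 ≤ t →
      (deriv (Ψ x) t -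
          ∑ i, pd i (fun y =>
            (n : ℝ) ^ (α - 1) * (Ψ y t) ^ (-α) * pd i (fun z => Ψ z t) y) x =
        (1 / α) * (2 / (2 - n * α)) *
          (R ^ 2 * T ^ (2 / (2 - n * α)) /
            (R ^ 2 * T ^ (2 / (2 - n * α)) - ‖x‖ ^ 2)) * (Ψ x t / (t + T))) ∧
      (deriv (Ψ x) t -
          ∑ i, pd i (fun y =>
            (n : ℝ) ^ (α - 1) * (Ψ y t) ^ (-α) * pd i (fun z => Ψ z t) y) x ≤ 0) := by
  obtain ⟨hα1, hα0⟩ := hα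
  intro x t hx ht
  have hαne : α ≠ 0 := ne_of_lt hα0
  set β : ℝ := 1 / α with hβdef
  have hβneg : β < 0 := one_div_neg.mpr hα0
  set M : ℝ := R ^ 2 * T ^ (2 / (2 - (n : ℝ) * α)) with hMdef
  have hMpos : 0 < M := by rw [hMdef]; positivity
  set G : ℝ := M - ‖x‖ ^ 2 with hGdef
  have hgx : 0 < G := by rw [hGdef]; linarith
  have hGne : G ≠ 0 := hgx.ne'
  have hP : 0 < t + T := by linarith
  have hPne : t + T ≠ 0 := hP.ne'
  -- continuity and eventual positivity
  have hcont : Continuous (fun y : EuclideanSpace ℝ (Fin n) => M - ‖y‖ ^ 2) :=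
    continuous_const.sub (continuous_norm.pow 2)
  -- derivative of the gauge
  have hgderiv : ∀ y : EuclideanSpace ℝ (Fin n),
      HasFDerivAt (fun z : EuclideanSpace ℝ (Fin n) => M - ‖z‖ ^ 2)
        ((-2 : ℝ) • (innerSL ℝ y)) y := by
    intro y
    have h1 : HasFDerivAt (fun z : EuclideanSpace ℝ (Fin n) => ‖z‖ ^ 2)
        (2 • (innerSL ℝ y)) y := by simpa using (hasFDerivAt_id y).norm_sq
    have h2 := (hasFDerivAt_const M y).sub h1
    refine h2.congr_fderiv ?_
    ext v
    simp
  -- derivative of (M - ‖z‖²)^(-β) where positive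
  have hBderiv : ∀ y : EuclideanSpace ℝ (Fin n), 0 < M - ‖y‖ ^ 2 →
      HasFDerivAt (fun z : EuclideanSpace ℝ (Fin n) => (M - ‖z‖ ^ 2) ^ (-β))
        ((2 * β * (M - ‖y‖ ^ 2) ^ (-β - 1)) • (innerSL ℝ y)) y := by
    intro y hy
    have hr : HasDerivAt (fun u : ℝ => u ^ (-β))
        ((-β) * (M - ‖y‖ ^ 2) ^ (-β - 1)) (M - ‖y‖ ^ 2) :=
      Real.hasDerivAt_rpow_const (Or.inl hy.ne')
    have h2 := hr.comp_hasFDerivAt y (hgderiv y)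
    refine h2.congr_fderiv ?_
    ext v
    simp only [ContinuousLinearMap.coe_smul', Pi.smul_apply, ContinuousLinearMap.neg_apply,
      smul_eq_mul, ContinuousLinearMap.smul_apply]
    ring
  -- Ψ at time t on the positivity set
  have hΨt : ∀ z : EuclideanSpace ℝ (Fin n), 0 < M - ‖z‖ ^ 2 →
      Ψ z t = Cα * (t + T) ^ β * (M - ‖z‖ ^ 2) ^ (-β) := by
    intro z hz
    rw [hΨ, Real.div_rpow hP.le hz.le, Real.rpow_neg hz.le, div_eq_mul_inv, mul_assoc]
  -- fderiv of Ψ(·,t)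
  have hΨfderiv : ∀ y : EuclideanSpace ℝ (Fin n), 0 < M - ‖y‖ ^ 2 →
      HasFDerivAt (fun z => Ψ z t)
        ((Cα * (t + T) ^ β * (2 * β * (M - ‖y‖ ^ 2) ^ (-β - 1))) • innerSL ℝ y) y := by
    intro y hy
    have h1 := (hBderiv y hy).const_mul (Cα * (t + T) ^ β)
    have h2 : (fun z => Ψ z t) =ᶠ[nhds y]
        fun z => Cα * (t + T) ^ β * (M - ‖z‖ ^ 2) ^ (-β) := by
      filter_upwards [(hcont.tendsto y).eventually (eventually_gt_nhds hy)] with z hz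
      exact hΨt z hz
    have h3 := h1.congr_of_eventuallyEq h2
    refine h3.congr_fderiv ?_
    ext v
    simp only [ContinuousLinearMap.coe_smul', Pi.smul_apply, ContinuousLinearMap.neg_apply,
      smul_eq_mul, ContinuousLinearMap.smul_apply]
    ring
  -- pd of Ψ(·,t)
  have hpdΨ : ∀ y : EuclideanSpace ℝ (Fin n), 0 < M - ‖y‖ ^ 2 → ∀ i : Fin n,
      pd i (fun z => Ψ z t) y
        = Cα * (t + T) ^ β * (2 * β * (M - ‖y‖ ^ 2) ^ (-β - 1)) * y i := by
    intro y hy i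
    show fderiv ℝ (fun z => Ψ z t) y (EuclideanSpace.single i (1 : ℝ)) = _
    rw [(hΨfderiv y hy).fderiv]
    simp [EuclideanSpace.inner_single_right]
  -- value of Ψ^{-α} on the positivity set
  have hβα : β * -α = -1 := by rw [hβdef]; field_simp
  have hβα' : -β * -α = 1 := by rw [hβdef]; field_simp
  have hΨpow : ∀ y : EuclideanSpace ℝ (Fin n), 0 < M - ‖y‖ ^ 2 →
      (Ψ y t) ^ (-α) = Cα ^ (-α) * (t + T)⁻¹ * (M - ‖y‖ ^ 2) := by
    intro y hy
    rw [hΨt y hy, Real.mul_rpow (by positivity) (by positivity),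
      Real.mul_rpow hCpos.le (by positivity),
      ← Real.rpow_mul hP.le, ← Real.rpow_mul hy.le, hβα, hβα',
      Real.rpow_neg_one, Real.rpow_one]
  -- the constant in the flux
  set K : ℝ := (n : ℝ) ^ (α - 1) * Cα ^ (-α) * Cα * (t + T) ^ β * (2 * β) / (t + T)
    with hKdef
  -- per-coordinate divergence term
  have hpdflux : ∀ i : Fin n,
      pd i (fun y => (n : ℝ) ^ (α - 1) * (Ψ y t) ^ (-α) *
          pd i (fun z => Ψ z t) y) x
        = K * G ^ (-β) + K * (2 * β * G ^ (-β - 1)) * x i ^ 2 := by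
    intro i
    have hflux : (fun y => (n : ℝ) ^ (α - 1) * (Ψ y t) ^ (-α) *
          pd i (fun z => Ψ z t) y) =ᶠ[nhds x]
        fun y => K * ((M - ‖y‖ ^ 2) ^ (-β) * y i) := by
      filter_upwards [(hcont.tendsto x).eventually
        (eventually_gt_nhds (by rw [← hGdef]; exact hgx))] with y hy
      rw [hΨpow y hy, hpdΨ y hy i, hKdef]
      have h5 : (M - ‖y‖ ^ 2) ^ (-β) = (M - ‖y‖ ^ 2) ^ (-β - 1) * (M - ‖y‖ ^ 2) := by
        rw [← Real.rpow_add_one hy.ne' (-β - 1)]; norm_num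
      rw [h5]
      field_simp
    have hproj : HasFDerivAt (fun y : EuclideanSpace ℝ (Fin n) => y i)
        (EuclideanSpace.proj (𝕜 := ℝ) i) x := by
      exact (EuclideanSpace.proj (𝕜 := ℝ) (ι := Fin n) i).hasFDerivAt (x := x)
    have hBx := hBderiv x (by rw [← hGdef]; exact hgx)
    have hmul : HasFDerivAt (fun y : EuclideanSpace ℝ (Fin n) => K * ((M - ‖y‖ ^ 2) ^ (-β) * y i)) _ x :=
      (hBx.mul hproj).const_mul K
    show fderiv ℝ _ x (EuclideanSpace.single i (1 : ℝ)) = _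
    rw [hflux.fderiv_eq, hmul.fderiv]
    rw [← hGdef]
    simp [EuclideanSpace.inner_single_right]
    ring
  -- sum of divergence terms
  have hxsq : ∑ i, x i ^ 2 = ‖x‖ ^ 2 := by
    rw [EuclideanSpace.norm_eq, Real.sq_sqrt (by positivity)]
    simp [sq_abs]
  have hsum : ∑ i, pd i (fun y => (n : ℝ) ^ (α - 1) * (Ψ y t) ^ (-α) *
        pd i (fun z => Ψ z t) y) x
      = (n : ℝ) * (K * G ^ (-β)) + K * (2 * β * G ^ (-β - 1)) * ‖x‖ ^ 2 := by
    rw [Finset.sum_congr rfl fun i _ => hpdflux i, Finset.sum_add_distrib,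
      Finset.sum_const, ← Finset.mul_sum, hxsq]
    simp [mul_comm]
  -- time derivative
  have hΨx : Ψ x = fun s => Cα * ((s + T) / G) ^ β := funext fun s => hΨ x s
  have hderiv : deriv (Ψ x) t = Cα * (β * ((t + T) / G) ^ (β - 1) * (1 / G)) := by
    rw [hΨx]
    have h1 : HasDerivAt (fun s : ℝ => (s + T) / G) (1 / G) t :=
      ((hasDerivAt_id t).add_const T).div_const G
    have h2 : HasDerivAt (fun u : ℝ => u ^ β)
        (β * ((t + T) / G) ^ (β - 1)) ((t + T) / G) :=
      Real.hasDerivAt_rpow_const (Or.inl (by positivity))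
    have h3 := (h2.comp t h1).const_mul Cα
    exact h3.deriv
  -- rpow bookkeeping
  have hBp : (0 : ℝ) < G ^ β := Real.rpow_pos_of_pos hgx β
  have hAp : (0 : ℝ) < (t + T) ^ β := Real.rpow_pos_of_pos hP β
  have hW1 : ((t + T) / G) ^ (β - 1) = ((t + T) ^ β / G ^ β) / ((t + T) / G) := by
    rw [Real.rpow_sub_one (by positivity), Real.div_rpow hP.le hgx.le]
  have hBneg : G ^ (-β) = (G ^ β)⁻¹ := Real.rpow_neg hgx.le β
  have hBneg1 : G ^ (-β - 1) = (G ^ β)⁻¹ / G := by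
    rw [Real.rpow_sub_one hGne, hBneg]
  have hCinv : Cα ^ (-α) = (2 * (n : ℝ) ^ (α - 1) * ((n : ℝ) - 2 / α))⁻¹ := by
    rw [Real.rpow_neg hCpos.le, hCα]
  -- nonvanishing facts
  have hn2 : (2 : ℝ) ≤ (n : ℝ) := by exact_mod_cast hn
  have hnα : (n : ℝ) * α ≤ 0 := mul_nonpos_of_nonneg_of_nonpos (Nat.cast_nonneg n) hα0.le
  have h2nα : (0 : ℝ) < 2 - (n : ℝ) * α := by linarith
  have hnd : (0 : ℝ) < (n : ℝ) - 2 / α := by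
    have : 2 / α < 0 := div_neg_of_pos_of_neg (by norm_num) hα0
    linarith
  have hnp : (0 : ℝ) < (n : ℝ) ^ (α - 1) := Real.rpow_pos_of_pos (by linarith) _
  -- the main identity
  have heq : deriv (Ψ x) t -
      ∑ i, pd i (fun y => (n : ℝ) ^ (α - 1) * (Ψ y t) ^ (-α) *
        pd i (fun z => Ψ z t) y) x
      = (1 / α) * (2 / (2 - (n : ℝ) * α)) * (M / G) * (Ψ x t / (t + T)) := by
    rw [hderiv, hsum, hΨt x (by rw [← hGdef]; exact hgx), ← hGdef,
      hW1, hBneg, hBneg1, hKdef, hCinv, hβdef,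
      show ‖x‖ ^ 2 = M - G by rw [hGdef]; ring]
    set A := (t + T) ^ (1/α) with hA2
    set B := G ^ (1/α) with hB2
    have hBpos : 0 < B := by rw [hB2]; positivity
    have hApos : 0 < A := by rw [hA2]; positivity
    exact pme_alg α (n : ℝ) M G A B Cα (t + T) hα0 hαne hP hgx hBpos h2nα hnd _ hnp
  refine ⟨heq, ?_⟩
  rw [heq]
  have h1 : (1 / α) * (2 / (2 - (n : ℝ) * α)) ≤ 0 :=
    mul_nonpos_of_nonpos_of_nonneg (le_of_lt (one_div_neg.mpr hα0))
      (div_nonneg (by norm_num) h2nα.le)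
  have h2 : 0 ≤ M / G := by positivity
  have h3 : 0 ≤ Ψ x t / (t + T) := by
    rw [hΨ x t]
    positivity
  exact mul_nonpos_of_nonpos_of_nonneg
    (mul_nonpos_of_nonpos_of_nonneg h1 h2) h3
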